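/- arXiv:1705.00901 — 3 statements merged into one kernel-verified Lean document; each statement's English description precedes it below -/
import Mathlib

section
/- There exist no elements x, y in ℚ(ζ₃) with x² + 13 y² = 2; equivalently, 2 is not a norm from ℚ(ζ₃)(√-13) to ℚ(ζ₃). -/
open Polynomial

instance : Fact (Nat.Prime 13) := ⟨by norm_num⟩

/-- By Hensel's lemma, `X² + X + 1` has a root in `ℚ_[13]` (lifting `3` mod `13`). -/
lemma exists_omega_padic13 : ∃ w : ℚ_[13], w ^ 2 + w + 1 = 0 := by
  have hF : ∃ z : ℤ_[13], (X ^ 2 + X + 1 : Polynomial ℤ_[13]).eval z = 0 := by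
    have h13 : ‖((X ^ 2 + X + 1 : Polynomial ℤ_[13])).eval 3‖ <
        ‖(X ^ 2 + X + 1 : Polynomial ℤ_[13]).derivative.eval 3‖ ^ 2 := by
      have he : ((X ^ 2 + X + 1 : Polynomial ℤ_[13])).eval 3 = 13 := by
        simp; norm_num
      have hd : (X ^ 2 + X + 1 : Polynomial ℤ_[13]).derivative.eval 3 = 7 := by
        simp; norm_num
      rw [he, hd]
      have h1 : ‖(13 : ℤ_[13])‖ = (13 : ℝ)⁻¹ := by
        have := PadicInt.norm_p (p := 13)
        norm_num at this ⊢; exact this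
      have h2 : ‖((7 : ℤ) : ℤ_[13])‖ = 1 := by
        rcases lt_or_eq_of_le (PadicInt.norm_le_one ((7 : ℤ) : ℤ_[13])) with h | h
        · rw [PadicInt.norm_int_lt_one_iff_dvd] at h; norm_num at h
        · exact h
      push_cast at h2
      rw [h1, h2]; norm_num
    obtain ⟨z, hz, -⟩ := hensels_lemma h13
    exact ⟨z, hz⟩
  obtain ⟨z, hz⟩ := hF
  refine ⟨(z : ℚ_[13]), ?_⟩
  simp only [eval_add, eval_pow, eval_X, eval_one] at hz
  have h0 : ((z ^ 2 + z + 1 : ℤ_[13]) : ℚ_[13]) = 0 := by rw [hz]; push_cast; ring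
  push_cast at h0
  exact h0

lemma no_sq_two_zmod13 : ∀ z : ZMod 13, z ^ 2 ≠ 2 := by decide

/-- `x² + 13 y² = 2` has no solutions in `ℚ_[13]`: by a valuation-parity argument both
`x` and `y` must be `13`-adic integers, and then `2` would be a square mod `13`. -/
lemma no_sol_padic13 : ¬ ∃ x y : ℚ_[13], x ^ 2 + 13 * y ^ 2 = 2 := by
  rintro ⟨x, y, h⟩
  have h13 : (13 : ℚ_[13]) ≠ 0 := by norm_num
  have hv13 : (13 : ℚ_[13]).valuation = 1 := by
    rw [show ((13 : ℚ_[13])) = ((13 : ℕ) : ℚ_[13]) by norm_num, Padic.valuation_natCast]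
    simp [padicValNat_self]
  have hv2 : (2 : ℚ_[13]).valuation = 0 := by
    rw [show ((2 : ℚ_[13])) = ((2 : ℕ) : ℚ_[13]) by norm_num, Padic.valuation_natCast]
    rw [padicValNat.eq_zero_of_not_dvd (by norm_num)]
    simp
  have key : ∀ a : ℤ, a < 0 → ¬ ((13:ℝ) ^ (-a) ≤ 1) := by
    intro a ha hle
    have : (1:ℝ) < (13:ℝ) ^ (-a) := one_lt_zpow₀ (by norm_num) (by omega)
    linarith
  have hx1 : ‖x‖ ≤ 1 ∧ ‖y‖ ≤ 1 := by
    by_cases hx0 : x = 0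
    · subst hx0
      have hy0 : y ≠ 0 := by rintro rfl; norm_num at h
      have := congrArg Padic.valuation h
      rw [zero_pow (by norm_num), zero_add, Padic.valuation_mul h13 (pow_ne_zero 2 hy0),
        hv13, hv2] at this
      rw [show y ^ 2 = y * y by ring, Padic.valuation_mul hy0 hy0] at this
      omega
    · by_cases hy0 : y = 0
      · subst hy0
        have h' : x ^ 2 = 2 := by rw [← h]; ring
        have := congrArg Padic.valuation h'
        rw [show x ^ 2 = x * x by ring, Padic.valuation_mul hx0 hx0, hv2] at this
        constructor
        · rw [Padic.norm_le_one_iff_val_nonneg]; omega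
        · simp
      · have hvxx : (x ^ 2).valuation = 2 * x.valuation := by
          rw [show x ^ 2 = x * x by ring, Padic.valuation_mul hx0 hx0]; ring
        have hvyy : (13 * y ^ 2).valuation = 1 + 2 * y.valuation := by
          rw [Padic.valuation_mul h13 (pow_ne_zero 2 hy0), hv13,
            show y ^ 2 = y * y by ring, Padic.valuation_mul hy0 hy0]; ring
        have hne : ‖x ^ 2‖ ≠ ‖13 * y ^ 2‖ := by
          rw [Padic.norm_eq_zpow_neg_valuation (pow_ne_zero 2 hx0),
            Padic.norm_eq_zpow_neg_valuation (mul_ne_zero h13 (pow_ne_zero 2 hy0)), hvxx, hvyy]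
          intro hEq
          have := zpow_right_injective₀ (by norm_num : (0:ℝ) < (13:ℕ)) (by norm_num) hEq
          omega
        have hmax : max ‖x ^ 2‖ ‖13 * y ^ 2‖ = 1 := by
          rw [← Padic.add_eq_max_of_ne hne, h]
          rw [Padic.norm_eq_zpow_neg_valuation (by norm_num : (2:ℚ_[13]) ≠ 0), hv2]; norm_num
        have hxle : ‖x ^ 2‖ ≤ 1 := le_of_le_of_eq (le_max_left _ _) hmax
        have hyle : ‖13 * y ^ 2‖ ≤ 1 := le_of_le_of_eq (le_max_right _ _) hmax
        rw [Padic.norm_eq_zpow_neg_valuation (pow_ne_zero 2 hx0), hvxx] at hxle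
        rw [Padic.norm_eq_zpow_neg_valuation (mul_ne_zero h13 (pow_ne_zero 2 hy0)), hvyy] at hyle
        push_cast at hxle hyle
        have hx' : (0:ℤ) ≤ 2 * x.valuation := by
          by_contra hc; push_neg at hc; exact key _ hc hxle
        have hy' : (0:ℤ) ≤ 1 + 2 * y.valuation := by
          by_contra hc; push_neg at hc; exact key _ hc hyle
        constructor
        · rw [Padic.norm_le_one_iff_val_nonneg]; omega
        · rw [Padic.norm_le_one_iff_val_nonneg]; omega
  obtain ⟨hx1, hy1⟩ := hx1
  set X : ℤ_[13] := ⟨x, hx1⟩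
  set Y : ℤ_[13] := ⟨y, hy1⟩
  have hXY : X ^ 2 + 13 * Y ^ 2 = 2 := by
    apply Subtype.ext
    push_cast
    exact h
  have h2 := congrArg (PadicInt.toZMod : ℤ_[13] →+* ZMod 13) hXY
  simp only [map_add, map_mul, map_pow, map_ofNat] at h2
  rw [show ((13 : ZMod 13)) = 0 by decide] at h2
  rw [zero_mul, add_zero] at h2
  exact no_sq_two_zmod13 _ h2

lemma quad_factor_padic13 (w : ℚ_[13]) (hw : w ^ 2 + w + 1 = 0) :
    (X ^ 2 + X + 1 : Polynomial ℚ_[13]) = (X - C w) * (X - C (-1 - w)) := by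
  have hCw : (C w) ^ 2 + C w + 1 = (0 : Polynomial ℚ_[13]) := by
    have := congrArg C hw
    simpa using this
  simp only [map_sub, map_neg, map_one]
  linear_combination hCw

/-- Since `13 ≡ 1 (mod 3)`, the third cyclotomic polynomial splits in `ℚ_[13]`. -/
lemma splits_cyclotomic_three_padic13 (w : ℚ_[13]) (hw : w ^ 2 + w + 1 = 0) :
    Splits ((cyclotomic 3 ℚ).map (algebraMap ℚ ℚ_[13])) := by
  rw [map_cyclotomic]
  have h2 : cyclotomic 3 ℚ_[13] = X ^ 2 + X + 1 := by
    simp [cyclotomic_prime, Finset.sum_range_succ]; ring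
  rw [h2, quad_factor_padic13 w hw]
  exact Splits.mul (Splits.X_sub_C _) (Splits.X_sub_C _)

/-- The embedding `ℚ(ζ₃) → ℚ_[13]`. -/
noncomputable def embCyclo13 (w : ℚ_[13]) (hw : w ^ 2 + w + 1 = 0) :
    CyclotomicField 3 ℚ →ₐ[ℚ] ℚ_[13] :=
  Polynomial.SplittingField.lift (cyclotomic 3 ℚ) (splits_cyclotomic_three_padic13 w hw)

/-- There exist no elements `x, y` in `ℚ(ζ₃)` (the third cyclotomic field) with
`x² + 13 y² = 2`; equivalently, `2` is not a norm from `ℚ(ζ₃)(√-13)` to `ℚ(ζ₃)`. -/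
theorem two_not_norm_from_sqrt_neg_thirteen :
    ¬ ∃ x y : CyclotomicField 3 ℚ, x ^ 2 + 13 * y ^ 2 = 2 := by
  rintro ⟨x, y, h⟩
  obtain ⟨w, hw⟩ := exists_omega_padic13
  let φ := embCyclo13 w hw
  apply no_sol_padic13
  refine ⟨φ x, φ y, ?_⟩
  have := congrArg φ h
  simpa only [map_add, map_mul, map_pow, map_ofNat] using this
end

section
/- There exist no elements x, y in ℚ(ζ₃) with x² + 13 y² = -2; equivalently, -2 is not a norm from ℚ(ζ₃)(√-13) to ℚ(ζ₃). -/
lemma decide1 : ∀ a b n : ZMod 13, a^2 - b^2 = -2*n^2 → 2*a*b - b^2 = 0 → a = 0 ∧ b = 0 ∧ n = 0 := by decide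

lemma decide2 : ∀ c d : ZMod 13, c^2 - d^2 = 0 → 2*c*d - d^2 = 0 → c = 0 ∧ d = 0 := by decide

lemma h13 : (13 : ZMod 13) = 0 := by decide

lemma int_descent : ∀ n : ℕ, ∀ A B C D : ℤ,
    A^2 - B^2 + 13*(C^2 - D^2) = -2*(n:ℤ)^2 →
    2*A*B - B^2 + 13*(2*C*D - D^2) = 0 → n = 0 := by
  intro n
  induction n using Nat.strong_induction_on with
  | _ n ih =>
  intro A B C D h1 h2
  have e1 : (A : ZMod 13)^2 - (B : ZMod 13)^2 = -2*((n : ℕ) : ZMod 13)^2 := by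
    have h := congrArg (Int.cast : ℤ → ZMod 13) h1
    push_cast at h
    linear_combination h - ((C:ZMod 13)^2 - (D:ZMod 13)^2) * h13
  have e2 : 2*(A : ZMod 13)*(B:ZMod 13) - (B : ZMod 13)^2 = 0 := by
    have h := congrArg (Int.cast : ℤ → ZMod 13) h2
    push_cast at h
    linear_combination h - (2*(C:ZMod 13)*(D:ZMod 13) - (D:ZMod 13)^2) * h13
  obtain ⟨hA, hB, hn⟩ := decide1 _ _ _ e1 e2
  obtain ⟨a, rfl⟩ := (ZMod.intCast_zmod_eq_zero_iff_dvd A 13).mp hA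
  obtain ⟨b, rfl⟩ := (ZMod.intCast_zmod_eq_zero_iff_dvd B 13).mp hB
  obtain ⟨m, rfl⟩ := (ZMod.natCast_eq_zero_iff n 13).mp hn
  push_cast at h1 h2
  have g1 : 13*a^2 - 13*b^2 + C^2 - D^2 = -26*(m:ℤ)^2 := by
    have h : (13:ℤ) * (13*a^2 - 13*b^2 + C^2 - D^2) = 13 * (-26*(m:ℤ)^2) := by
      linear_combination h1
    exact mul_left_cancel₀ (by norm_num) h
  have g2 : 26*a*b - 13*b^2 + 2*C*D - D^2 = 0 := by
    have h : (13:ℤ) * (26*a*b - 13*b^2 + 2*C*D - D^2) = 13 * 0 := by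
      linear_combination h2
    exact mul_left_cancel₀ (by norm_num) h
  have f1 : (C : ZMod 13)^2 - (D : ZMod 13)^2 = 0 := by
    have h := congrArg (Int.cast : ℤ → ZMod 13) g1
    push_cast at h
    linear_combination h - ((a:ZMod 13)^2 - (b:ZMod 13)^2 + 2*((m:ZMod 13))^2) * h13
  have f2 : 2*(C : ZMod 13)*(D:ZMod 13) - (D : ZMod 13)^2 = 0 := by
    have h := congrArg (Int.cast : ℤ → ZMod 13) g2
    push_cast at h
    linear_combination h - (2*(a:ZMod 13)*(b:ZMod 13) - (b:ZMod 13)^2) * h13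
  obtain ⟨hC, hD⟩ := decide2 _ _ f1 f2
  obtain ⟨c, rfl⟩ := (ZMod.intCast_zmod_eq_zero_iff_dvd C 13).mp hC
  obtain ⟨d, rfl⟩ := (ZMod.intCast_zmod_eq_zero_iff_dvd D 13).mp hD
  rcases Nat.eq_zero_or_pos m with hm | hm
  · simp [hm]
  · have : m = 0 := by
      apply ih m (by omega) a b c d
      · have h : (169:ℤ) * (a^2 - b^2 + 13*(c^2 - d^2)) = 169 * (-2*(m:ℤ)^2) := by
          linear_combination h1
        exact mul_left_cancel₀ (by norm_num) h
      · have h : (169:ℤ) * (2*a*b - b^2 + 13*(2*c*d - d^2)) = 169 * 0 := by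
          linear_combination h2
        exact mul_left_cancel₀ (by norm_num) h
    omega

lemma rat_no_sol : ¬ ∃ a b c d : ℚ,
    a^2 - b^2 + 13*(c^2 - d^2) = -2 ∧ 2*a*b - b^2 + 13*(2*c*d - d^2) = 0 := by
  rintro ⟨a, b, c, d, h1, h2⟩
  set n : ℕ := a.den * b.den * c.den * d.den with hn
  have hden : ∀ q : ℚ, (q.num : ℚ) = q * q.den := fun q => by
    rw [mul_comm, ← Rat.den_mul_eq_num]
  have hA : ((a.num * (b.den * c.den * d.den) : ℤ) : ℚ) = a * n := by
    push_cast [hn]; rw [hden a]; ring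
  have hB : ((b.num * (a.den * c.den * d.den) : ℤ) : ℚ) = b * n := by
    push_cast [hn]; rw [hden b]; ring
  have hC : ((c.num * (a.den * b.den * d.den) : ℤ) : ℚ) = c * n := by
    push_cast [hn]; rw [hden c]; ring
  have hD : ((d.num * (a.den * b.den * c.den) : ℤ) : ℚ) = d * n := by
    push_cast [hn]; rw [hden d]; ring
  have hnn : n = 0 := by
    apply int_descent n (a.num * (b.den * c.den * d.den)) (b.num * (a.den * c.den * d.den))
      (c.num * (a.den * b.den * d.den)) (d.num * (a.den * b.den * c.den))
    · have : ((a.num * (b.den * c.den * d.den) : ℤ) : ℚ)^2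
          - ((b.num * (a.den * c.den * d.den) : ℤ) : ℚ)^2
          + 13*(((c.num * (a.den * b.den * d.den) : ℤ) : ℚ)^2
          - ((d.num * (a.den * b.den * c.den) : ℤ) : ℚ)^2) = -2*((n:ℤ):ℚ)^2 := by
        rw [hA, hB, hC, hD]; push_cast; linear_combination (n:ℚ)^2 * h1
      exact_mod_cast this
    · have : 2*((a.num * (b.den * c.den * d.den) : ℤ) : ℚ)*((b.num * (a.den * c.den * d.den) : ℤ) : ℚ)
          - ((b.num * (a.den * c.den * d.den) : ℤ) : ℚ)^2
          + 13*(2*((c.num * (a.den * b.den * d.den) : ℤ) : ℚ)*((d.num * (a.den * b.den * c.den) : ℤ) : ℚ)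
          - ((d.num * (a.den * b.den * c.den) : ℤ) : ℚ)^2) = 0 := by
        rw [hA, hB, hC, hD]; linear_combination (n:ℚ)^2 * h2
      exact_mod_cast this
  have : a.den ≠ 0 := a.den_nz
  have : b.den ≠ 0 := b.den_nz
  have : c.den ≠ 0 := c.den_nz
  have : d.den ≠ 0 := d.den_nz
  simp [hn, Nat.mul_eq_zero] at hnn

/-- There exist no elements `x, y` in `ℚ(ζ₃)` (the third cyclotomic field) with
`x² + 13 y² = -2`; equivalently, `-2` is not a norm from `ℚ(ζ₃)(√-13)` to `ℚ(ζ₃)`. -/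
theorem neg_two_not_norm_from_sqrt_neg_thirteen :
    ¬ ∃ x y : CyclotomicField 3 ℚ, x ^ 2 + 13 * y ^ 2 = -2 := by
  rintro ⟨x, y, h⟩
  haveI : IsCyclotomicExtension {3} ℚ (CyclotomicField 3 ℚ) := CyclotomicField.isCyclotomicExtension 3 ℚ
  set ζ : CyclotomicField 3 ℚ := IsCyclotomicExtension.zeta 3 ℚ (CyclotomicField 3 ℚ) with hzeta
  have hζ := IsCyclotomicExtension.zeta_spec 3 ℚ (CyclotomicField 3 ℚ)
  have hrel : ζ^2 + ζ + 1 = 0 := by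
    have h3 : ζ^(3:ℕ) = 1 := by
      have := hζ.pow_eq_one
      exact_mod_cast this
    have hne : ζ - 1 ≠ 0 := sub_ne_zero.mpr (hζ.ne_one (by norm_num))
    have : (ζ - 1) * (ζ^2 + ζ + 1) = 0 := by linear_combination h3
    rcases mul_eq_zero.mp this with h' | h'
    · exact absurd h' hne
    · exact h'
  have repr : ∀ z : CyclotomicField 3 ℚ, ∃ a b : ℚ, z = (a : CyclotomicField 3 ℚ) + b * ζ := by
    intro z
    have htop : Algebra.adjoin ℚ ({ζ} : Set (CyclotomicField 3 ℚ)) = ⊤ :=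
      IsCyclotomicExtension.adjoin_primitive_root_eq_top hζ
    have hz : z ∈ Algebra.adjoin ℚ ({ζ} : Set (CyclotomicField 3 ℚ)) := htop ▸ Algebra.mem_top
    induction hz using Algebra.adjoin_induction with
    | mem w hw =>
        rw [Set.mem_singleton_iff] at hw
        exact ⟨0, 1, by simp [hw]⟩
    | algebraMap r =>
        exact ⟨r, 0, by simp [eq_ratCast (algebraMap ℚ (CyclotomicField 3 ℚ)) r]⟩
    | add u v _ _ hu hv =>
        obtain ⟨a, b, rfl⟩ := hu
        obtain ⟨c, d, rfl⟩ := hv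
        exact ⟨a + c, b + d, by push_cast; ring⟩
    | mul u v _ _ hu hv =>
        obtain ⟨a, b, rfl⟩ := hu
        obtain ⟨c, d, rfl⟩ := hv
        refine ⟨a*c - b*d, a*d + b*c - b*d, ?_⟩
        push_cast
        linear_combination ((b : CyclotomicField 3 ℚ) * d) * hrel
  have inj : ∀ a b : ℚ, (a : CyclotomicField 3 ℚ) + b * ζ = 0 → a = 0 ∧ b = 0 := by
    intro a b hab
    by_cases hb : b = 0
    · subst hb
      simp only [Rat.cast_zero, zero_mul, add_zero] at hab
      exact ⟨by exact_mod_cast hab, rfl⟩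
    · exfalso
      have hz : (b : CyclotomicField 3 ℚ) * ζ = -(a : CyclotomicField 3 ℚ) := by
        linear_combination hab
      have hK : ((a^2 - a*b + b^2 : ℚ) : CyclotomicField 3 ℚ) = 0 := by
        push_cast
        linear_combination ((b : CyclotomicField 3 ℚ))^2 * hrel +
          ((a : CyclotomicField 3 ℚ) - b - (b : CyclotomicField 3 ℚ) * ζ) * hz
      have hq : a^2 - a*b + b^2 = 0 := by exact_mod_cast hK
      have hb2 : 0 < b^2 := by positivity
      nlinarith [sq_nonneg (2*a - b), hb2]
  obtain ⟨a, b, hx⟩ := repr x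
  obtain ⟨c, d, hy⟩ := repr y
  subst hx hy
  have key : ((a^2 - b^2 + 13*c^2 - 13*d^2 + 2 : ℚ) : CyclotomicField 3 ℚ)
      + ((2*a*b - b^2 + 26*c*d - 13*d^2 : ℚ) : CyclotomicField 3 ℚ) * ζ = 0 := by
    push_cast
    linear_combination h - ((b : CyclotomicField 3 ℚ)^2 + 13*(d : CyclotomicField 3 ℚ)^2) * hrel
  obtain ⟨e1, e2⟩ := inj _ _ key
  exact rat_no_sol ⟨a, b, c, d, by linarith, by linarith⟩
end

section
/- Work inside ℂ. Let ζ₃ be a primitive third root of unity, ζ₇ a primitive seventh root of unity, L = ℚ(ζ₃, √2, √13) and E = L(ζ₇ + ζ₇⁻¹) = L(cos(2π/7)), a degree-3 extension of L. If p is a rational prime with p ≡ 3 (mod 7) or p ≡ 5 (mod 7), then p is not a norm from E to L: there is no x ∈ E with N_{E/L}(x) = p. -/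
open scoped IntermediateField

/-- The field `L = ℚ(ζ₃, √2, √13) ⊆ ℂ`, generated over `ℚ` by a primitive third root of
unity `ζ₃` and the real square roots of `2` and `13`. -/
noncomputable def Lfield (ζ₃ : ℂ) : IntermediateField ℚ ℂ :=
  ℚ⟮ζ₃, ((Real.sqrt 2 : ℝ) : ℂ), ((Real.sqrt 13 : ℝ) : ℂ)⟯

/-- The cubic extension `E = L(ζ₇ + ζ₇⁻¹) = L(cos(2π/7))` of `L`, inside `ℂ`. -/
noncomputable def Efield (ζ₃ ζ₇ : ℂ) : IntermediateField (Lfield ζ₃) ℂ :=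
  IntermediateField.adjoin (Lfield ζ₃) {ζ₇ + ζ₇⁻¹}

namespace Stmt11Aux

open Polynomial IntermediateField

set_option maxHeartbeats 1000000
set_option synthInstance.maxHeartbeats 100000

/-! ### The cubic `X³ + X² - 2X - 1` modulo `p` -/

lemma seven_ne_zero (p : ℕ) [hp : Fact p.Prime] (hmod : p % 7 = 3 ∨ p % 7 = 5) :
    (7 : ZMod p) ≠ 0 := by
  have : ((7 : ℕ) : ZMod p) ≠ 0 := by
    rw [Ne, ZMod.natCast_eq_zero_iff]
    intro h
    have := (Nat.prime_dvd_prime_iff_eq hp.out (by norm_num)).mp h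
    omega
  simpa using this

lemma no_root (p : ℕ) [hp : Fact p.Prime] (hmod : p % 7 = 3 ∨ p % 7 = 5) (t : ZMod p)
    (ht : t ^ 3 + t ^ 2 - 2 * t - 1 = 0) : False := by
  haveI : Fact (Nat.Prime 7) := ⟨by norm_num⟩
  have h7 := seven_ne_zero p hmod
  by_cases hex : ∃ u : ZMod p, u ^ 2 - t * u + 1 = 0
  · obtain ⟨u, hu⟩ := hex
    have hu0 : u ≠ 0 := by
      rintro rfl
      apply one_ne_zero (α := ZMod p)
      linear_combination hu
    have u7 : u ^ 7 = 1 := by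
      linear_combination ((u - 1) * u ^ 3) * ht +
        (u^5 + u^4*t - u^3 + u^3*t^2 - u^2*t^2 + u^2 - u*t - 1) * hu
    have hu1 : u ≠ 1 := by
      rintro rfl
      have ht2 : t = 2 := by linear_combination -hu
      subst ht2
      norm_num at ht
      exact h7 ht
    have hord : orderOf u = 7 := orderOf_eq_prime u7 hu1
    have hdvd : (7 : ℕ) ∣ p - 1 := by
      rw [← hord]
      exact orderOf_dvd_of_pow_eq_one (ZMod.pow_card_sub_one_eq_one hu0)
    have hp2 : 2 ≤ p := hp.out.two_le
    omega
  · -- no root in `ZMod p` : go to the quadratic extension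
    have hgmonic : (X ^ 2 - C t * X + 1 : (ZMod p)[X]).Monic := by monicity!
    have hgdeg : (X ^ 2 - C t * X + 1 : (ZMod p)[X]).natDegree = 2 := by compute_degree!
    have hgirr : Irreducible (X ^ 2 - C t * X + 1 : (ZMod p)[X]) := by
      rw [irreducible_iff_roots_eq_zero_of_degree_le_three (by omega) (by omega)]
      rw [Multiset.eq_zero_iff_forall_notMem]
      intro u hu
      rw [mem_roots hgmonic.ne_zero] at hu
      refine hex ⟨u, ?_⟩
      simpa [IsRoot] using hu
    haveI : Fact (Irreducible (X ^ 2 - C t * X + 1 : (ZMod p)[X])) := ⟨hgirr⟩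
    set u : AdjoinRoot (X ^ 2 - C t * X + 1 : (ZMod p)[X]) :=
      AdjoinRoot.root _ with huu
    set t' : AdjoinRoot (X ^ 2 - C t * X + 1 : (ZMod p)[X]) :=
      algebraMap (ZMod p) _ t with ht'
    have hu : u ^ 2 - t' * u + 1 = 0 := by
      have h := AdjoinRoot.eval₂_root (X ^ 2 - C t * X + 1 : (ZMod p)[X])
      rw [huu, ht', AdjoinRoot.algebraMap_eq]
      simpa [eval₂_add, eval₂_sub, eval₂_mul, eval₂_pow, eval₂_X, eval₂_C] using h
    have htR : t' ^ 3 + t' ^ 2 - 2 * t' - 1 = 0 := by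
      have h := congrArg (algebraMap (ZMod p) (AdjoinRoot (X ^ 2 - C t * X + 1))) ht
      rw [ht']
      simpa [map_add, map_sub, map_mul, map_pow, map_one, map_ofNat] using h
    have u7 : u ^ 7 = 1 := by
      linear_combination ((u - 1) * u ^ 3) * htR +
        (u^5 + u^4*t' - u^3 + u^3*t'^2 - u^2*t'^2 + u^2 - u*t' - 1) * hu
    have hu1 : u ≠ 1 := by
      intro h
      rw [h] at hu
      have ht2 : t' = 2 := by linear_combination -hu
      have h2 : t = 2 := by
        apply (algebraMap (ZMod p) (AdjoinRoot (X ^ 2 - C t * X + 1 : (ZMod p)[X]))).injective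
        rw [← ht', ht2]
        simp [map_ofNat]
      subst h2
      norm_num at ht
      exact h7 ht
    have hu0 : u ≠ 0 := by
      intro h
      rw [h] at hu
      apply one_ne_zero (α := AdjoinRoot (X ^ 2 - C t * X + 1 : (ZMod p)[X]))
      linear_combination hu
    have hord : orderOf u = 7 := orderOf_eq_prime u7 hu1
    let pb := AdjoinRoot.powerBasis (f := (X ^ 2 - C t * X + 1 : (ZMod p)[X])) hgmonic.ne_zero
    letI : Fintype (AdjoinRoot (X ^ 2 - C t * X + 1 : (ZMod p)[X])) :=
      Module.fintypeOfFintype pb.basis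
    have hcard : Fintype.card (AdjoinRoot (X ^ 2 - C t * X + 1 : (ZMod p)[X])) = p ^ 2 := by
      rw [Module.card_fintype pb.basis]
      simp [AdjoinRoot.powerBasis, hgdeg, ZMod.card, pb]
    have hdvd : (7 : ℕ) ∣ Fintype.card (AdjoinRoot (X ^ 2 - C t * X + 1 : (ZMod p)[X])) - 1 := by
      rw [← hord]
      exact orderOf_dvd_of_pow_eq_one (FiniteField.pow_card_sub_one_eq_one u hu0)
    rw [hcard] at hdvd
    have hpm : p ^ 2 % 7 = 2 ∨ p ^ 2 % 7 = 4 := by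
      rw [Nat.pow_mod]
      rcases hmod with h | h <;> rw [h] <;> norm_num
    have hp2 : 2 ≤ p := hp.out.two_le
    have h1 : 1 ≤ p ^ 2 := Nat.one_le_pow _ _ (by omega)
    omega

/-! ### The norm form of the cubic order -/

/-- The norm form of `R[α]`, `α³ + α² - 2α - 1 = 0`, in the basis `1, α, α²`. -/
def Ff {R : Type*} [CommRing R] (a b c : R) : R :=
  a^3 - a^2*b + 5*a^2*c - 2*a*b^2 - a*b*c + 6*a*c^2 + b^3 - b^2*c - 2*b*c^2 + c^3

section NormFormula

variable {F S : Type*} [Field F] [CommRing S] [Algebra F S]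

lemma repr3 (pb : PowerBasis F S) (hdim : pb.dim = 3) (x y w : F) (i : Fin 3) :
    (pb.basis.reindex (finCongr hdim)).repr (x • 1 + y • pb.gen + w • pb.gen ^ 2) i
      = ![x, y, w] i := by
  have hb : ∀ j : Fin 3, (pb.basis.reindex (finCongr hdim)) j = pb.gen ^ (j : ℕ) := by
    intro j
    rw [Module.Basis.reindex_apply, PowerBasis.basis_eq_pow]
    congr 1
  have h0 := hb 0
  have h1 := hb 1
  have h2 := hb 2
  simp only [Fin.val_zero, Fin.val_one, Fin.val_two, pow_zero, pow_one] at h0 h1 h2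
  rw [show x • (1:S) + y • pb.gen + w • pb.gen ^ 2
      = x • (pb.basis.reindex (finCongr hdim)) 0 + y • (pb.basis.reindex (finCongr hdim)) 1
        + w • (pb.basis.reindex (finCongr hdim)) 2 by rw [h0, h1, h2]]
  simp only [map_add, map_smul, Module.Basis.repr_self, Finsupp.coe_add, Finsupp.coe_smul,
    Pi.add_apply, Pi.smul_apply, Finsupp.single_apply, smul_eq_mul]
  fin_cases i <;> simp [Matrix.cons_val_zero, Matrix.cons_val_one]

lemma combo_eq_zero (pb : PowerBasis F S) (hdim : pb.dim = 3) {x y w : F}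
    (h : x • (1:S) + y • pb.gen + w • pb.gen ^ 2 = 0) : x = 0 ∧ y = 0 ∧ w = 0 := by
  have h0 := repr3 pb hdim x y w 0
  have h1 := repr3 pb hdim x y w 1
  have h2 := repr3 pb hdim x y w 2
  rw [h] at h0 h1 h2
  simp only [_root_.map_zero, Finsupp.coe_zero, Pi.zero_apply] at h0 h1 h2
  simp at h0 h1 h2
  exact ⟨h0.symm, h1.symm, h2.symm⟩

lemma norm_formula (pb : PowerBasis F S) (hdim : pb.dim = 3)
    (hgen : pb.gen ^ 3 + pb.gen ^ 2 - 2 * pb.gen - 1 = 0) (a b c : F) :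
    Algebra.norm F (a • (1:S) + b • pb.gen + c • pb.gen ^ 2) = Ff a b c := by
  set B := pb.basis.reindex (finCongr hdim) with hB
  set z := a • (1:S) + b • pb.gen + c • pb.gen ^ 2 with hz
  have hb : ∀ j : Fin 3, B j = pb.gen ^ (j : ℕ) := by
    intro j
    rw [hB, Module.Basis.reindex_apply, PowerBasis.basis_eq_pow]
    congr 1
  have h0 := hb 0; have h1 := hb 1; have h2 := hb 2
  simp only [Fin.val_zero, Fin.val_one, Fin.val_two, pow_zero, pow_one] at h0 h1 h2
  have hsm : ∀ (x : F) (s : S), x • s = algebraMap F S x * s := fun x s => Algebra.smul_def x s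
  have prod0 : z * B 0 = a • (1:S) + b • pb.gen + c • pb.gen ^ 2 := by
    rw [h0, mul_one]
  have prod1 : z * B 1 = c • (1:S) + (a + 2*c) • pb.gen + (b - c) • pb.gen ^ 2 := by
    rw [h1, hz]
    simp only [hsm, map_add, map_sub, map_mul, map_ofNat]
    linear_combination (algebraMap F S c) * hgen
  have prod2 : z * B 2 = (b - c) • (1:S) + (2*b - c) • pb.gen + (a - b + 3*c) • pb.gen ^ 2 := by
    rw [h2, hz]
    simp only [hsm, map_add, map_sub, map_mul, map_ofNat]
    linear_combination ((algebraMap F S b) + (algebraMap F S c) * (pb.gen - 1)) * hgen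
  have hM : Algebra.leftMulMatrix B z =
      !![a, c, b - c; b, a + 2*c, 2*b - c; c, b - c, a - b + 3*c] := by
    ext i j
    rw [Algebra.leftMulMatrix_eq_repr_mul]
    fin_cases j
    · rw [show (⟨0, by omega⟩ : Fin 3) = 0 from rfl, prod0, repr3 pb hdim]
      fin_cases i <;> simp
    · rw [show (⟨1, by omega⟩ : Fin 3) = 1 from rfl, prod1, repr3 pb hdim]
      fin_cases i <;> simp
    · rw [show (⟨2, by omega⟩ : Fin 3) = 2 from rfl, prod2, repr3 pb hdim]
      fin_cases i <;> simp
  rw [Algebra.norm_eq_matrix_det B, hM]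
  simp [Matrix.det_fin_three, Ff]
  ring

end NormFormula

/-! ### Nonvanishing of the norm form mod `p`, and the descent -/

lemma cub_irred (p : ℕ) [hp : Fact p.Prime] (hmod : p % 7 = 3 ∨ p % 7 = 5) :
    Irreducible (X ^ 3 + X ^ 2 - 2 * X - 1 : (ZMod p)[X]) := by
  have hmonic : (X ^ 3 + X ^ 2 - 2 * X - 1 : (ZMod p)[X]).Monic := by monicity!
  have hdeg : (X ^ 3 + X ^ 2 - 2 * X - 1 : (ZMod p)[X]).natDegree = 3 := by compute_degree!
  rw [irreducible_iff_roots_eq_zero_of_degree_le_three (by omega) (by omega)]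
  rw [Multiset.eq_zero_iff_forall_notMem]
  intro t htr
  rw [mem_roots hmonic.ne_zero] at htr
  exact no_root p hmod t (by simpa [IsRoot] using htr)

lemma Ff_ne_zero_mod (p : ℕ) [hp : Fact p.Prime] (hmod : p % 7 = 3 ∨ p % 7 = 5)
    (a b c : ZMod p) (h : ¬ (a = 0 ∧ b = 0 ∧ c = 0)) : Ff a b c ≠ 0 := by
  haveI : Fact (Irreducible (X ^ 3 + X ^ 2 - 2 * X - 1 : (ZMod p)[X])) := ⟨cub_irred p hmod⟩
  have hmonic : (X ^ 3 + X ^ 2 - 2 * X - 1 : (ZMod p)[X]).Monic := by monicity!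
  have hdeg : (X ^ 3 + X ^ 2 - 2 * X - 1 : (ZMod p)[X]).natDegree = 3 := by compute_degree!
  let pb := AdjoinRoot.powerBasis (f := (X ^ 3 + X ^ 2 - 2 * X - 1 : (ZMod p)[X]))
    hmonic.ne_zero
  have hdim : pb.dim = 3 := by simpa [pb, AdjoinRoot.powerBasis] using hdeg
  have hgen : pb.gen ^ 3 + pb.gen ^ 2 - 2 * pb.gen - 1 = 0 := by
    have h := AdjoinRoot.eval₂_root (X ^ 3 + X ^ 2 - 2 * X - 1 : (ZMod p)[X])
    simpa [pb, AdjoinRoot.powerBasis, eval₂_add, eval₂_sub, eval₂_mul, eval₂_pow, eval₂_X,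
      eval₂_one] using h
  have hz : a • (1 : AdjoinRoot (X ^ 3 + X ^ 2 - 2 * X - 1 : (ZMod p)[X]))
      + b • pb.gen + c • pb.gen ^ 2 ≠ 0 := by
    intro h0
    exact h (combo_eq_zero pb hdim h0)
  rw [← norm_formula pb hdim hgen a b c]
  haveI : Module.Finite (ZMod p) (AdjoinRoot (X ^ 3 + X ^ 2 - 2 * X - 1 : (ZMod p)[X])) :=
    Module.Finite.of_basis pb.basis
  haveI : Module.Free (ZMod p) (AdjoinRoot (X ^ 3 + X ^ 2 - 2 * X - 1 : (ZMod p)[X])) :=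
    Module.Free.of_basis pb.basis
  exact Algebra.norm_ne_zero_iff.mpr hz

lemma Ff_not_dvd (p : ℕ) [hp : Fact p.Prime] (hmod : p % 7 = 3 ∨ p % 7 = 5)
    (a b c : ℤ) (h : ¬ ((p:ℤ) ∣ a ∧ (p:ℤ) ∣ b ∧ (p:ℤ) ∣ c)) : ¬ (p:ℤ) ∣ Ff a b c := by
  intro hdvd
  apply h
  have hcast : ((Ff a b c : ℤ) : ZMod p) = Ff (a : ZMod p) (b : ZMod p) (c : ZMod p) := by
    unfold Ff; push_cast; ring
  have h0 : Ff (a : ZMod p) (b : ZMod p) (c : ZMod p) = 0 := by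
    rw [← hcast, ZMod.intCast_zmod_eq_zero_iff_dvd]
    exact_mod_cast hdvd
  by_contra hcon
  refine Ff_ne_zero_mod p hmod _ _ _ ?_ h0
  intro ⟨h1, h2, h3⟩
  exact hcon ⟨(ZMod.intCast_zmod_eq_zero_iff_dvd a p).mp h1,
    (ZMod.intCast_zmod_eq_zero_iff_dvd b p).mp h2,
    (ZMod.intCast_zmod_eq_zero_iff_dvd c p).mp h3⟩

lemma descent (p : ℕ) [hp : Fact p.Prime] (hmod : p % 7 = 3 ∨ p % 7 = 5) :
    ∀ N : ℕ, ∀ n : ℕ, ¬ 3 ∣ n → ∀ a b c d : ℤ, d ≠ 0 →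
      a.natAbs + b.natAbs + c.natAbs + d.natAbs ≤ N →
      Ff a b c ≠ (p:ℤ) ^ n * d ^ 3 := by
  intro N
  induction N with
  | zero =>
    intro n hn a b c d hd hle _
    exact hd (Int.natAbs_eq_zero.mp (by omega))
  | succ N ih =>
    intro n hn a b c d hd hle heq
    have hp1 : (1:ℤ) < (p:ℤ) := by exact_mod_cast hp.out.one_lt
    have hn1 : 1 ≤ n := by omega
    have h2 : (2:ℕ) ≤ p := hp.out.two_le
    by_cases hall : (p:ℤ) ∣ a ∧ (p:ℤ) ∣ b ∧ (p:ℤ) ∣ c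
    · obtain ⟨⟨a', rfl⟩, ⟨b', rfl⟩, ⟨c', rfl⟩⟩ := hall
      have hhom : Ff ((p:ℤ)*a') ((p:ℤ)*b') ((p:ℤ)*c') = (p:ℤ)^3 * Ff a' b' c' := by
        unfold Ff; ring
      rw [hhom] at heq
      have hp0 : (p:ℤ) ≠ 0 := by positivity
      have ha : ((p:ℤ)*a').natAbs = p * a'.natAbs := by rw [Int.natAbs_mul]; simp
      have hb : ((p:ℤ)*b').natAbs = p * b'.natAbs := by rw [Int.natAbs_mul]; simp
      have hc : ((p:ℤ)*c').natAbs = p * c'.natAbs := by rw [Int.natAbs_mul]; simp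
      rw [ha, hb, hc] at hle
      have ea2 : 2 * a'.natAbs ≤ p * a'.natAbs := Nat.mul_le_mul_right _ h2
      have eb2 : 2 * b'.natAbs ≤ p * b'.natAbs := Nat.mul_le_mul_right _ h2
      have ec2 : 2 * c'.natAbs ≤ p * c'.natAbs := Nat.mul_le_mul_right _ h2
      by_cases hn3 : 3 ≤ n
      · have hsplit : (p:ℤ)^n = (p:ℤ)^3 * (p:ℤ)^(n-3) := by
          rw [← pow_add]; congr 1; omega
        have heq' : Ff a' b' c' = (p:ℤ) ^ (n - 3) * d ^ 3 := by
          apply mul_left_cancel₀ (a := (p:ℤ)^3) (by positivity)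
          rw [heq, hsplit]; ring
        have habc : ¬ (a' = 0 ∧ b' = 0 ∧ c' = 0) := by
          rintro ⟨rfl, rfl, rfl⟩
          rw [show Ff (0:ℤ) 0 0 = 0 by unfold Ff; ring] at heq'
          exact (mul_ne_zero (by positivity) (pow_ne_zero 3 hd)) heq'.symm
        have hone : 1 ≤ a'.natAbs ∨ 1 ≤ b'.natAbs ∨ 1 ≤ c'.natAbs := by
          by_contra hcon
          push_neg at hcon
          exact habc ⟨Int.natAbs_eq_zero.mp (by omega), Int.natAbs_eq_zero.mp (by omega),
            Int.natAbs_eq_zero.mp (by omega)⟩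
        have hsize : a'.natAbs + b'.natAbs + c'.natAbs + d.natAbs ≤ N := by omega
        exact ih (n - 3) (by omega) a' b' c' d hd hsize heq'
      · have hpd : (p:ℤ) ∣ d := by
          have hdvd3 : (p:ℤ) ∣ d ^ 3 := by
            have h1 : (p:ℤ)^n * ((p:ℤ)^(3-n) * Ff a' b' c') = (p:ℤ)^n * d ^ 3 := by
              rw [← heq, ← mul_assoc, ← pow_add]
              congr 2; omega
            have h2' := mul_left_cancel₀ (a := (p:ℤ)^n) (by positivity) h1
            refine dvd_trans (dvd_pow_self ((p:ℤ)) (n := 3 - n) (by omega)) ⟨_, h2'.symm⟩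
          exact (Nat.prime_iff_prime_int.mp hp.out).dvd_of_dvd_pow hdvd3
        obtain ⟨d', rfl⟩ := hpd
        have hd' : d' ≠ 0 := by
          intro h0; rw [h0, mul_zero] at hd; exact hd rfl
        have heq' : Ff a' b' c' = (p:ℤ) ^ n * d' ^ 3 := by
          apply mul_left_cancel₀ (a := (p:ℤ)^3) (by positivity)
          rw [heq]; ring
        have hdn : ((p:ℤ)*d').natAbs = p * d'.natAbs := by rw [Int.natAbs_mul]; simp
        rw [hdn] at hle
        have ed2 : 2 * d'.natAbs ≤ p * d'.natAbs := Nat.mul_le_mul_right _ h2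
        have hone : 1 ≤ d'.natAbs := by
          rcases Nat.eq_zero_or_pos d'.natAbs with h0 | h0
          · exact absurd (Int.natAbs_eq_zero.mp h0) hd'
          · exact h0
        have hsize : a'.natAbs + b'.natAbs + c'.natAbs + d'.natAbs ≤ N := by omega
        exact ih n hn a' b' c' d' hd' hsize heq'
    · refine Ff_not_dvd p hmod a b c hall ?_
      rw [heq]
      exact Dvd.dvd.mul_right (dvd_pow_self _ (by omega)) _

lemma Ff_ne_pow (p : ℕ) [hp : Fact p.Prime] (hmod : p % 7 = 3 ∨ p % 7 = 5)
    (n : ℕ) (hn : ¬ 3 ∣ n) (q₀ q₁ q₂ : ℚ) : Ff q₀ q₁ q₂ ≠ (p:ℚ) ^ n := by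
  intro heq
  set d : ℤ := (q₀.den : ℤ) * q₁.den * q₂.den with hd
  have hd0 : d ≠ 0 := by
    rw [hd]
    refine mul_ne_zero (mul_ne_zero ?_ ?_) ?_ <;>
      exact_mod_cast Rat.den_ne_zero _
  set a : ℤ := q₀.num * q₁.den * q₂.den with ha
  set b : ℤ := q₁.num * q₀.den * q₂.den with hb
  set c : ℤ := q₂.num * q₀.den * q₁.den with hc
  have hden : ∀ q : ℚ, ((q.den : ℚ)) ≠ 0 := fun q => by
    exact_mod_cast Rat.den_ne_zero q
  have hq₀ : (a:ℚ)/(d:ℚ) = q₀ := by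
    rw [ha, hd]; push_cast
    rw [show (q₀.num:ℚ) * q₁.den * q₂.den = (q₀.num:ℚ) * ((q₁.den:ℚ)*(q₂.den:ℚ)) by ring,
      show ((q₀.den:ℚ)) * q₁.den * q₂.den = (q₀.den:ℚ) * ((q₁.den:ℚ)*(q₂.den:ℚ)) by ring,
      mul_div_mul_right _ _ (mul_ne_zero (hden q₁) (hden q₂)), Rat.num_div_den]
  have hq₁ : (b:ℚ)/(d:ℚ) = q₁ := by
    rw [hb, hd]; push_cast
    rw [show (q₁.num:ℚ) * q₀.den * q₂.den = (q₁.num:ℚ) * ((q₀.den:ℚ)*(q₂.den:ℚ)) by ring,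
      show ((q₀.den:ℚ)) * q₁.den * q₂.den = (q₁.den:ℚ) * ((q₀.den:ℚ)*(q₂.den:ℚ)) by ring,
      mul_div_mul_right _ _ (mul_ne_zero (hden q₀) (hden q₂)), Rat.num_div_den]
  have hq₂ : (c:ℚ)/(d:ℚ) = q₂ := by
    rw [hc, hd]; push_cast
    rw [show (q₂.num:ℚ) * q₀.den * q₁.den = (q₂.num:ℚ) * ((q₀.den:ℚ)*(q₁.den:ℚ)) by ring,
      show ((q₀.den:ℚ)) * q₁.den * q₂.den = (q₂.den:ℚ) * ((q₀.den:ℚ)*(q₁.den:ℚ)) by ring,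
      mul_div_mul_right _ _ (mul_ne_zero (hden q₀) (hden q₁)), Rat.num_div_den]
  have hdQ : (d : ℚ) ≠ 0 := Int.cast_ne_zero.mpr hd0
  have hint : Ff (a:ℚ) (b:ℚ) (c:ℚ) = (p:ℚ) ^ n * (d:ℚ) ^ 3 := by
    calc Ff (a:ℚ) (b:ℚ) (c:ℚ)
        = Ff ((a:ℚ)/(d:ℚ)) ((b:ℚ)/(d:ℚ)) ((c:ℚ)/(d:ℚ)) * (d:ℚ)^3 := by
          unfold Ff; field_simp
      _ = Ff q₀ q₁ q₂ * (d:ℚ)^3 := by rw [hq₀, hq₁, hq₂]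
      _ = (p:ℚ) ^ n * (d:ℚ)^3 := by rw [heq]
  have hintZ : Ff a b c = (p:ℤ) ^ n * d ^ 3 := by
    have h2 : ((Ff a b c : ℤ) : ℚ) = (((p:ℤ)^n * d^3 : ℤ) : ℚ) := by
      rw [show ((Ff a b c : ℤ) : ℚ) = Ff (a:ℚ) (b:ℚ) (c:ℚ) by unfold Ff; push_cast; ring]
      rw [hint]; push_cast; ring
    exact_mod_cast h2
  exact descent p hmod (a.natAbs + b.natAbs + c.natAbs + d.natAbs) n hn a b c d hd0
    le_rfl hintZ

/-! ### Irreducibility of the cubic over `ℚ` -/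

lemma cubQ_irred : Irreducible (X ^ 3 + X ^ 2 - 2 * X - 1 : ℚ[X]) := by
  haveI : Fact (Nat.Prime 3) := ⟨by norm_num⟩
  have hmonicZ : (X ^ 3 + X ^ 2 - 2 * X - 1 : ℤ[X]).Monic := by monicity!
  have hZ : Irreducible (X ^ 3 + X ^ 2 - 2 * X - 1 : ℤ[X]) := by
    apply hmonicZ.irreducible_of_irreducible_map (Int.castRingHom (ZMod 3))
    have hmap : (X ^ 3 + X ^ 2 - 2 * X - 1 : ℤ[X]).map (Int.castRingHom (ZMod 3))
        = X ^ 3 + X ^ 2 - 2 * X - 1 := by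
      simp [Polynomial.map_add, Polynomial.map_sub, Polynomial.map_pow, Polynomial.map_mul,
        Polynomial.map_ofNat, Polynomial.map_one, Polynomial.map_X]
    rw [hmap]
    exact cub_irred 3 (Or.inl rfl)
  have hmap2 : (X ^ 3 + X ^ 2 - 2 * X - 1 : ℤ[X]).map (Int.castRingHom ℚ)
      = X ^ 3 + X ^ 2 - 2 * X - 1 := by
    simp [Polynomial.map_add, Polynomial.map_sub, Polynomial.map_pow, Polynomial.map_mul,
      Polynomial.map_ofNat, Polynomial.map_one, Polynomial.map_X]
  rw [← hmap2]
  exact (Polynomial.IsPrimitive.Int.irreducible_iff_irreducible_map_cast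
    hmonicZ.isPrimitive).mp hZ

/-- Degree of a simple adjunction by a root of a quadratic divides 2. -/
lemma finrank_adjoin_dvd_two {F E : Type*} [Field F] [Field E] [Algebra F E] (x : E)
    (q : F[X]) (hq : q.natDegree = 2) (hq0 : q ≠ 0) (hroot : Polynomial.aeval x q = 0)
    (hint : IsIntegral F x) :
    Module.finrank F F⟮x⟯ ∣ 2 := by
  rw [IntermediateField.adjoin.finrank hint]
  have hdvd := minpoly.dvd F x hroot
  have hle : (minpoly F x).natDegree ≤ 2 := hq ▸ Polynomial.natDegree_le_of_dvd hdvd hq0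
  have hpos : 0 < (minpoly F x).natDegree := minpoly.natDegree_pos hint
  interval_cases h : (minpoly F x).natDegree <;> norm_num

end Stmt11Aux

set_option maxHeartbeats 2000000 in
set_option synthInstance.maxHeartbeats 100000 in
/-- Work inside `ℂ`.  Let `ζ₃` be a primitive third root of unity, `ζ₇` a primitive seventh
root of unity, `L = ℚ(ζ₃, √2, √13)` and `E = L(ζ₇ + ζ₇⁻¹) = L(cos(2π/7))`, a degree-3
extension of `L`.  If `p` is a rational prime with `p ≡ 3 (mod 7)` or `p ≡ 5 (mod 7)`,
then `p` is not a norm from `E` to `L`: there is no `x ∈ E` with `N_{E/L}(x) = p`. -/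
theorem prime_three_or_five_mod_seven_not_norm_from_E_to_L
    (ζ₃ ζ₇ : ℂ) (h₃ : IsPrimitiveRoot ζ₃ 3) (h₇ : IsPrimitiveRoot ζ₇ 7)
    (p : ℕ) (hp : p.Prime) (hmod : p % 7 = 3 ∨ p % 7 = 5) :
    ¬ ∃ x : Efield ζ₃ ζ₇, Algebra.norm (Lfield ζ₃) x = (p : Lfield ζ₃) := by
  open Polynomial IntermediateField Stmt11Aux in
  haveI hfp : Fact p.Prime := ⟨hp⟩
  rintro ⟨x, hx⟩
  -- basic facts about the roots of unity
  have hζ7 : ζ₇ ^ 7 = 1 := h₇.pow_eq_one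
  have hζ1 : ζ₇ ≠ 1 := h₇.ne_one (by norm_num)
  have hsum7 : ζ₇^6 + ζ₇^5 + ζ₇^4 + ζ₇^3 + ζ₇^2 + ζ₇ + 1 = 0 := by
    rcases mul_eq_zero.mp (show (ζ₇ - 1) * (ζ₇^6 + ζ₇^5 + ζ₇^4 + ζ₇^3 + ζ₇^2 + ζ₇ + 1) = 0
      by linear_combination hζ7) with h | h
    · exact absurd (sub_eq_zero.mp h) hζ1
    · exact h
  have hinv : ζ₇⁻¹ = ζ₇ ^ 6 := inv_eq_of_mul_eq_one_right (by linear_combination hζ7)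
  have hroot : (ζ₇ + ζ₇⁻¹)^3 + (ζ₇ + ζ₇⁻¹)^2 - 2*(ζ₇ + ζ₇⁻¹) - 1 = 0 := by
    rw [hinv]
    linear_combination (ζ₇^12 - ζ₇^11 + 3*ζ₇^7 - 2*ζ₇^6 - ζ₇^4 + 3*ζ₇^2 - ζ₇ - 1) * hsum7
  have hα_int : IsIntegral ℚ (ζ₇ + ζ₇⁻¹) := by
    refine ⟨X ^ 3 + X ^ 2 - 2 * X - 1, by monicity!, ?_⟩
    simp only [eval₂_add, eval₂_sub, eval₂_mul, eval₂_pow, eval₂_X, eval₂_one, eval₂_ofNat]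
    exact hroot
  have h3pow : ζ₃ ^ 3 = 1 := h₃.pow_eq_one
  have h31 : ζ₃ ≠ 1 := h₃.ne_one (by norm_num)
  have h3quad : ζ₃^2 + ζ₃ + 1 = 0 := by
    rcases mul_eq_zero.mp (show (ζ₃ - 1) * (ζ₃^2 + ζ₃ + 1) = 0
      by linear_combination h3pow) with h | h
    · exact absurd (sub_eq_zero.mp h) h31
    · exact h
  have hsqrt2 : (((Real.sqrt 2 : ℝ) : ℂ))^2 = 2 := by
    norm_cast
    exact_mod_cast Real.sq_sqrt (by norm_num : (2:ℝ) ≥ 0)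
  have hsqrt13 : (((Real.sqrt 13 : ℝ) : ℂ))^2 = 13 := by
    norm_cast
    exact_mod_cast Real.sq_sqrt (by norm_num : (13:ℝ) ≥ 0)
  -- integrality of the generators of L
  have hint3 : IsIntegral ℚ ζ₃ := by
    refine ⟨X ^ 2 + X + 1, by monicity!, ?_⟩
    simp only [eval₂_add, eval₂_pow, eval₂_X, eval₂_one]
    exact h3quad
  have hint2 : IsIntegral ℚ ((Real.sqrt 2 : ℝ) : ℂ) := by
    refine ⟨X ^ 2 - 2, by monicity!, ?_⟩
    simp only [eval₂_sub, eval₂_pow, eval₂_X, eval₂_ofNat]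
    rw [hsqrt2]; ring
  have hint13 : IsIntegral ℚ ((Real.sqrt 13 : ℝ) : ℂ) := by
    refine ⟨X ^ 2 - 13, by monicity!, ?_⟩
    simp only [eval₂_sub, eval₂_pow, eval₂_X, eval₂_ofNat]
    rw [hsqrt13]; ring
  -- finite dimensionality
  haveI hfdL : FiniteDimensional ℚ (Lfield ζ₃) := by
    apply IntermediateField.finiteDimensional_adjoin
    rintro z hz
    rcases hz with rfl | rfl | rfl
    · exact hint3
    · exact hint2
    · exact hint13
  haveI hfdE : FiniteDimensional (Lfield ζ₃) (Efield ζ₃ ζ₇) := by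
    apply IntermediateField.finiteDimensional_adjoin
    rintro z hz
    rw [Set.mem_singleton_iff.mp hz]
    exact hα_int.tower_top
  haveI hfdQE : FiniteDimensional ℚ (Efield ζ₃ ζ₇) :=
    FiniteDimensional.trans ℚ (Lfield ζ₃) (Efield ζ₃ ζ₇)
  haveI : Algebra.IsIntegral ℚ (Efield ζ₃ ζ₇) := Algebra.IsIntegral.of_finite ℚ _
  haveI : Algebra.IsSeparable ℚ (Efield ζ₃ ζ₇) := Algebra.IsSeparable.of_integral ℚ _
  -- first norm composition
  have step1 : Algebra.norm ℚ x = (p : ℚ) ^ (Module.finrank ℚ (Lfield ζ₃)) := by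
    rw [← Algebra.norm_norm (R := ℚ) (S := (Lfield ζ₃)) (a := x), hx]
    rw [show ((p : Lfield ζ₃)) = algebraMap ℚ (Lfield ζ₃) (p : ℚ) by push_cast; rfl]
    rw [Algebra.norm_algebraMap]
  -- second tower, through K = ℚ(ζ₇ + ζ₇⁻¹)
  have hKE : ∀ z : ℂ, z ∈ ℚ⟮ζ₇ + ζ₇⁻¹⟯ → z ∈ Efield ζ₃ ζ₇ := by
    intro z hz
    have hle : ℚ⟮ζ₇ + ζ₇⁻¹⟯ ≤ (Efield ζ₃ ζ₇).restrictScalars ℚ := by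
      apply IntermediateField.adjoin_le_iff.mpr
      intro w hw
      rw [Set.mem_singleton_iff.mp hw]
      exact IntermediateField.mem_adjoin_simple_self (Lfield ζ₃) (ζ₇ + ζ₇⁻¹)
    exact hle hz
  let incl : ℚ⟮ζ₇ + ζ₇⁻¹⟯ →+* Efield ζ₃ ζ₇ :=
    { toFun := fun z => ⟨(z : ℂ), hKE _ z.2⟩
      map_one' := by ext; simp
      map_mul' := fun a b => by ext; simp
      map_zero' := by ext; simp
      map_add' := fun a b => by ext; simp }
  letI algKE : Algebra ℚ⟮ζ₇ + ζ₇⁻¹⟯ (Efield ζ₃ ζ₇) := incl.toAlgebra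
  haveI : IsScalarTower ℚ ℚ⟮ζ₇ + ζ₇⁻¹⟯ (Efield ζ₃ ζ₇) :=
    IsScalarTower.of_algebraMap_eq' (Subsingleton.elim _ _)
  haveI : FiniteDimensional ℚ⟮ζ₇ + ζ₇⁻¹⟯ (Efield ζ₃ ζ₇) :=
    FiniteDimensional.right ℚ ℚ⟮ζ₇ + ζ₇⁻¹⟯ (Efield ζ₃ ζ₇)
  have step2 : Algebra.norm ℚ (Algebra.norm ℚ⟮ζ₇ + ζ₇⁻¹⟯ x)
      = (p : ℚ) ^ (Module.finrank ℚ (Lfield ζ₃)) := by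
    rw [Algebra.norm_norm (R := ℚ) (S := ℚ⟮ζ₇ + ζ₇⁻¹⟯) (a := x)]
    exact step1
  -- finrank ℚ L divides 8
  have e1 : (IntermediateField.adjoin ℚ⟮ζ₃⟯
      {((Real.sqrt 2 : ℝ) : ℂ), ((Real.sqrt 13 : ℝ) : ℂ)}).restrictScalars ℚ = Lfield ζ₃ := by
    erw [IntermediateField.adjoin_adjoin_left, Set.singleton_union]
    rfl
  have e2 : (IntermediateField.adjoin (ℚ⟮ζ₃⟯⟮((Real.sqrt 2 : ℝ) : ℂ)⟯)
      {((Real.sqrt 13 : ℝ) : ℂ)}).restrictScalars ℚ⟮ζ₃⟯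
      = IntermediateField.adjoin ℚ⟮ζ₃⟯
        {((Real.sqrt 2 : ℝ) : ℂ), ((Real.sqrt 13 : ℝ) : ℂ)} := by
    rw [IntermediateField.adjoin_adjoin_left, Set.singleton_union]
  have hd1 : Module.finrank ℚ ℚ⟮ζ₃⟯ ∣ 2 := by
    refine finrank_adjoin_dvd_two ζ₃ (X ^ 2 + X + 1) (by compute_degree!) ?_ ?_ hint3
    · intro h
      have := congrArg (Polynomial.natDegree) h
      rw [show (X ^ 2 + X + 1 : ℚ[X]).natDegree = 2 by compute_degree!] at this
      simp at this
    · simp only [map_add, map_pow, Polynomial.aeval_X, map_one]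
      exact h3quad
  have hd2 : Module.finrank ℚ⟮ζ₃⟯ ℚ⟮ζ₃⟯⟮((Real.sqrt 2 : ℝ) : ℂ)⟯ ∣ 2 := by
    refine finrank_adjoin_dvd_two _ (X ^ 2 - 2) (by compute_degree!) ?_ ?_ hint2.tower_top
    · intro h
      have := congrArg (Polynomial.natDegree) h
      rw [show (X ^ 2 - 2 : (ℚ⟮ζ₃⟯ : IntermediateField ℚ ℂ)[X]).natDegree = 2
        by compute_degree!] at this
      simp at this
    · simp only [map_sub, map_pow, Polynomial.aeval_X, map_ofNat]
      rw [hsqrt2]; ring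
  have hd3 : Module.finrank ℚ⟮ζ₃⟯⟮((Real.sqrt 2 : ℝ) : ℂ)⟯
      ℚ⟮ζ₃⟯⟮((Real.sqrt 2 : ℝ) : ℂ)⟯⟮((Real.sqrt 13 : ℝ) : ℂ)⟯ ∣ 2 := by
    refine finrank_adjoin_dvd_two _ (X ^ 2 - 13) (by compute_degree!) ?_ ?_
      (IsIntegral.tower_top (A := ℚ⟮ζ₃⟯⟮((Real.sqrt 2 : ℝ) : ℂ)⟯) hint13)
    · intro h
      have := congrArg (Polynomial.natDegree) h
      rw [show (X ^ 2 - 13 :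
        (ℚ⟮ζ₃⟯⟮((Real.sqrt 2 : ℝ) : ℂ)⟯ : IntermediateField ℚ⟮ζ₃⟯ ℂ)[X]).natDegree = 2
        by compute_degree!] at this
      simp at this
    · simp only [map_sub, map_pow, Polynomial.aeval_X, map_ofNat]
      rw [hsqrt13]; ring
  have f1 : Module.finrank ℚ (Lfield ζ₃) = Module.finrank ℚ ℚ⟮ζ₃⟯ *
      Module.finrank ℚ⟮ζ₃⟯ (IntermediateField.adjoin ℚ⟮ζ₃⟯
        {((Real.sqrt 2 : ℝ) : ℂ), ((Real.sqrt 13 : ℝ) : ℂ)}) := by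
    have h := Module.finrank_mul_finrank ℚ ℚ⟮ζ₃⟯ (IntermediateField.adjoin ℚ⟮ζ₃⟯
      {((Real.sqrt 2 : ℝ) : ℂ), ((Real.sqrt 13 : ℝ) : ℂ)})
    rw [← e1]
    exact h.symm
  have f2 : Module.finrank ℚ⟮ζ₃⟯ (IntermediateField.adjoin ℚ⟮ζ₃⟯
        {((Real.sqrt 2 : ℝ) : ℂ), ((Real.sqrt 13 : ℝ) : ℂ)})
      = Module.finrank ℚ⟮ζ₃⟯ ℚ⟮ζ₃⟯⟮((Real.sqrt 2 : ℝ) : ℂ)⟯ *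
        Module.finrank ℚ⟮ζ₃⟯⟮((Real.sqrt 2 : ℝ) : ℂ)⟯
          ℚ⟮ζ₃⟯⟮((Real.sqrt 2 : ℝ) : ℂ)⟯⟮((Real.sqrt 13 : ℝ) : ℂ)⟯ := by
    have h := Module.finrank_mul_finrank ℚ⟮ζ₃⟯ ℚ⟮ζ₃⟯⟮((Real.sqrt 2 : ℝ) : ℂ)⟯
      (IntermediateField.adjoin (ℚ⟮ζ₃⟯⟮((Real.sqrt 2 : ℝ) : ℂ)⟯) {((Real.sqrt 13 : ℝ) : ℂ)})
    rw [← e2]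
    exact h.symm
  have hn8 : Module.finrank ℚ (Lfield ζ₃) ∣ 8 := by
    rw [f1, f2, show (8:ℕ) = 2 * (2 * 2) by norm_num]
    exact mul_dvd_mul hd1 (mul_dvd_mul hd2 hd3)
  have h3n : ¬ (3 ∣ Module.finrank ℚ (Lfield ζ₃)) := by
    intro h
    have := h.trans hn8
    norm_num at this
  -- the cubic field K and its power basis
  have hirrQ : Irreducible (X ^ 3 + X ^ 2 - 2 * X - 1 : ℚ[X]) := cubQ_irred
  have hmin : minpoly ℚ (ζ₇ + ζ₇⁻¹) = X ^ 3 + X ^ 2 - 2 * X - 1 := by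
    refine (minpoly.eq_of_irreducible_of_monic hirrQ ?_ (by monicity!)).symm
    simp only [map_add, map_sub, map_pow, map_mul, Polynomial.aeval_X, map_one, map_ofNat]
    exact hroot
  let pb := IntermediateField.adjoin.powerBasis hα_int
  have hdim : pb.dim = 3 := by
    show (minpoly ℚ (ζ₇ + ζ₇⁻¹)).natDegree = 3
    rw [hmin]
    compute_degree!
  have hgenmap : algebraMap ℚ⟮ζ₇ + ζ₇⁻¹⟯ ℂ pb.gen = ζ₇ + ζ₇⁻¹ :=
    IntermediateField.AdjoinSimple.algebraMap_gen ℚ _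
  have hgen : pb.gen ^ 3 + pb.gen ^ 2 - 2 * pb.gen - 1 = 0 := by
    apply (algebraMap ℚ⟮ζ₇ + ζ₇⁻¹⟯ ℂ).injective
    rw [map_sub, map_sub, map_add, map_pow, map_pow, map_mul, map_one, map_zero, map_ofNat,
      hgenmap]
    exact hroot
  -- decompose the norm y in the power basis
  set y : ℚ⟮ζ₇ + ζ₇⁻¹⟯ := Algebra.norm ℚ⟮ζ₇ + ζ₇⁻¹⟯ x with hy
  set B := pb.basis.reindex (finCongr hdim) with hB
  have hb : ∀ j : Fin 3, B j = pb.gen ^ (j : ℕ) := by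
    intro j
    rw [hB, Module.Basis.reindex_apply, PowerBasis.basis_eq_pow]
    congr 1
  have hb0 := hb 0; have hb1 := hb 1; have hb2 := hb 2
  simp only [Fin.val_zero, Fin.val_one, Fin.val_two, pow_zero, pow_one] at hb0 hb1 hb2
  have hsumy : B.repr y 0 • B 0 + B.repr y 1 • B 1 + B.repr y 2 • B 2 = y := by
    have h := B.sum_repr y
    rwa [Fin.sum_univ_three] at h
  have hnorm : Algebra.norm ℚ y = Ff (B.repr y 0) (B.repr y 1) (B.repr y 2) := by
    conv_lhs => rw [← hsumy]
    rw [hb0, hb1, hb2]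
    exact norm_formula pb hdim hgen _ _ _
  rw [hnorm] at step2
  exact Ff_ne_pow p hmod _ h3n _ _ _ step2
end
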